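/- Suppose T and U are standard finite trees, U is a simple extension of T, α ∈ ht[U] \ ht[T] with α < max(ht[T]), and β = min(ht[T] \ (α+1)). If a₀ ∈ U_α, a₀⁺ is the unique element of T_β above a₀, a₁ ∈ T, and a₀⁺ and a₁ are incomparable in T, then a₀ ∧_U a₁ = a₀⁺ ∧_T a₁. -/

import Mathlib

noncomputable section
open scoped Classical

namespace AKST

/-- The first uncountable ordinal. -/
def ω1 : Ordinal := (Cardinal.aleph 1).ord

/-- The second uncountable ordinal. -/
def ω2 : Ordinal := (Cardinal.aleph 2).ord

/-- The height of a countable ordinal `γ`: the unique `α` with `ω·α ≤ γ < ω·(α+1)`. -/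
def ht (γ : Ordinal) : Ordinal := γ / Ordinal.omega0

/-- A standard finite tree. -/
structure SFT where
  elems : Finset Ordinal
  lt : Ordinal → Ordinal → Prop
  zero_mem : 0 ∈ elems
  mem_ok : ∀ x ∈ elems, x = 0 ∨ (Ordinal.omega0 ≤ x ∧ x < ω1)
  lt_mem : ∀ {x y}, lt x y → x ∈ elems ∧ y ∈ elems
  lt_trans' : ∀ {x y z}, lt x y → lt y z → lt x z
  lt_irrefl' : ∀ x, ¬ lt x x
  pred_linear : ∀ {x y z}, lt y x → lt z x → lt y z ∨ y = z ∨ lt z y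
  lt_ht : ∀ {x y}, lt x y → ht x < ht y
  pred_level : ∀ x ∈ elems, ∀ α, (∃ z ∈ elems, ht z = α) → α < ht x →
    ∃ y ∈ elems, ht y = α ∧ lt y x

namespace SFT

/-- The non-strict tree order. -/
def le (T : SFT) (x y : Ordinal) : Prop := T.lt x y ∨ (x = y ∧ x ∈ T.elems)

/-- `ht[T]`: the set of nonzero heights of elements of `T`. -/
def heights (T : SFT) : Set Ordinal := {α | α ≠ 0 ∧ ∃ x ∈ T.elems, ht x = α}

/-- Level `α` of `T`. -/
def level (T : SFT) (α : Ordinal) : Set Ordinal := {x | x ∈ T.elems ∧ ht x = α}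

/-- `max(ht[T])`. -/
def maxHeight (T : SFT) : Ordinal := sSup T.heights

/-- The least element of `ht[T]` greater than `α`. -/
def minAbove (T : SFT) (α : Ordinal) : Ordinal := sInf {β | β ∈ T.heights ∧ α < β}

/-- The drop-down `x↾α`: the unique element of `T` of height `α` below `x`. -/
def drop (T : SFT) (α x : Ordinal) : Ordinal :=
  if h : ∃ y, y ∈ T.elems ∧ ht y = α ∧ T.lt y x then h.choose else 0

/-- `z` is the meet of `x` and `y` in `T`. -/
def isMeet (T : SFT) (x y z : Ordinal) : Prop :=
  T.le z x ∧ T.le z y ∧ ∀ w, T.le w x → T.le w y → T.le w z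

/-- The meet `x ∧_T y`. -/
def meet (T : SFT) (x y : Ordinal) : Ordinal :=
  if h : ∃ z, T.isMeet x y z then h.choose else 0

/-- `U` extends `T`. -/
def Ext (T U : SFT) : Prop :=
  (↑T.elems : Set Ordinal) ⊆ ↑U.elems ∧ ∀ {x y}, T.lt x y → U.lt x y

/-- `X` has unique drop-downs to `α` in `T`. -/
def UniqueDrops (T : SFT) (α : Ordinal) (X : Set Ordinal) : Prop :=
  ∀ x ∈ X, ∀ y ∈ X, T.drop α x = T.drop α y → x = y

/-- `U` is a simple extension of `T`. -/
def SimpleExt (U T : SFT) : Prop :=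
  Ext T U ∧
  (∀ x ∈ U.elems, x ∉ T.elems → ht x ∉ T.heights) ∧
  (∀ α, α ∈ U.heights → α ∉ T.heights → α < T.maxHeight →
     U.UniqueDrops α (T.level (T.minAbove α)))

/-- `x` and `y` are incomparable in `T`. -/
def Incomp (T : SFT) (x y : Ordinal) : Prop := x ≠ y ∧ ¬ T.lt x y ∧ ¬ T.lt y x

/-- `T` is normal: every element has successors at every higher occupied level. -/
def Normal (T : SFT) : Prop :=
  ∀ x ∈ T.elems, ∀ γ ∈ T.heights, ht x < γ → ∃ y ∈ T.elems, ht y = γ ∧ T.lt x y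

end SFT

/-! Partial functions on a tree, represented by their graphs. -/

def dom (f : Set (Ordinal × Ordinal)) : Set Ordinal := {x | ∃ y, (x, y) ∈ f}

def ran (f : Set (Ordinal × Ordinal)) : Set Ordinal := {y | ∃ x, (x, y) ∈ f}

/-- The graph is single-valued. -/
def FuncGraph (f : Set (Ordinal × Ordinal)) : Prop :=
  ∀ {x y y'}, (x, y) ∈ f → (x, y') ∈ f → y = y'

/-- The graph is injective. -/
def InjGraph (f : Set (Ordinal × Ordinal)) : Prop :=
  ∀ {x x' y}, (x, y) ∈ f → (x', y) ∈ f → x = x'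

/-- The graph is a partial function from `T` to `T`. -/
def Carr (T : SFT) (f : Set (Ordinal × Ordinal)) : Prop :=
  ∀ p ∈ f, p.1 ∈ T.elems ∧ p.2 ∈ T.elems

/-- Strictly increasing. -/
def StrictIncr (T : SFT) (f : Set (Ordinal × Ordinal)) : Prop :=
  ∀ {x y x' y'}, (x, y) ∈ f → (x', y') ∈ f → T.lt x x' → T.lt y y'

/-- Level preserving. -/
def LevelPres (f : Set (Ordinal × Ordinal)) : Prop :=
  ∀ p ∈ f, ht p.1 = ht p.2

/-- Downwards closed (the domain is closed under drop-downs). -/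
def DownClosedDom (T : SFT) (f : Set (Ordinal × Ordinal)) : Prop :=
  ∀ x y, (x, y) ∈ f → ∀ β ∈ T.heights, β < ht x →
    ∃ x' y', x' ∈ T.elems ∧ ht x' = β ∧ T.lt x' x ∧ (x', y') ∈ f

/-- No fixed points other than 0. -/
def NoFix (f : Set (Ordinal × Ordinal)) : Prop := ∀ x, (x, x) ∈ f → x = 0

/-- `f` is a standard function on `T`. -/
def IsStdFun (T : SFT) (f : Set (Ordinal × Ordinal)) : Prop :=
  Carr T f ∧ FuncGraph f ∧ InjGraph f ∧ StrictIncr T f ∧ LevelPres f ∧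
    DownClosedDom T f ∧ NoFix f

/-- `f^m(x) = y`, for `m ∈ {-1, 1}`. -/
def appPow (f : Set (Ordinal × Ordinal)) (m : ℤ) (x y : Ordinal) : Prop :=
  (m = 1 ∧ (x, y) ∈ f) ∨ (m = -1 ∧ (y, x) ∈ f)

/-- `X↾α` and `X` are `f`-consistent. -/
def Consistent (T : SFT) (f : Set (Ordinal × Ordinal)) (α : Ordinal) (X : Set Ordinal) : Prop :=
  ∀ x ∈ X, ∀ y ∈ X, ((T.drop α x, T.drop α y) ∈ f ↔ (x, y) ∈ f)

/-- The family `{F τ : τ ∈ A}` is separated on the tuple `a 0, ..., a (n-1)`. -/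
def SepOnTuple (F : Ordinal → Set (Ordinal × Ordinal)) (A : Finset Ordinal)
    (n : ℕ) (a : ℕ → Ordinal) : Prop :=
  ∀ i < n, ∀ j₀ < i, ∀ j₁ < i, ∀ m₀ m₁ : ℤ, ∀ τ₀ ∈ A, ∀ τ₁ ∈ A,
    (m₀ = 1 ∨ m₀ = -1) → (m₁ = 1 ∨ m₁ = -1) →
    appPow (F τ₀) m₀ (a i) (a j₀) → appPow (F τ₁) m₁ (a i) (a j₁) →
    j₀ = j₁ ∧ m₀ = m₁ ∧ τ₀ = τ₁

/-- The family is separated on the set `X`. -/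
def SepOnSet (F : Ordinal → Set (Ordinal × Ordinal)) (A : Finset Ordinal)
    (X : Set Ordinal) : Prop :=
  ∃ (n : ℕ) (a : ℕ → Ordinal), (∀ i < n, ∀ j < n, a i = a j → i = j) ∧
    X = a '' {i | i < n} ∧ SepOnTuple F A n a

/-- The family is `ρ`-separated on the tuple `a 0, ..., a (n-1)` (of elements of level `α`). -/
def RhoSepOnTuple (ρ : Ordinal → Ordinal → Ordinal) (F : Ordinal → Set (Ordinal × Ordinal))
    (A : Finset Ordinal) (α : Ordinal) (n : ℕ) (a : ℕ → Ordinal) : Prop :=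
  ∀ i < n, ∀ j₀ < i, ∀ j₁ < i, ∀ m₀ m₁ : ℤ, ∀ τ₀ ∈ A, ∀ τ₁ ∈ A,
    (m₀ = 1 ∨ m₀ = -1) → (m₁ = 1 ∨ m₁ = -1) →
    appPow (F τ₀) m₀ (a i) (a j₀) → appPow (F τ₁) m₁ (a i) (a j₁) →
    j₀ = j₁ ∧ ((m₀ = m₁ ∧ τ₀ = τ₁) ∨ α ≤ ρ τ₀ τ₁)

/-- The family is `ρ`-separated on the set `X ⊆ T_α`. -/
def RhoSepOnSet (ρ : Ordinal → Ordinal → Ordinal) (F : Ordinal → Set (Ordinal × Ordinal))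
    (A : Finset Ordinal) (α : Ordinal) (X : Set Ordinal) : Prop :=
  ∃ (n : ℕ) (a : ℕ → Ordinal), (∀ i < n, ∀ j < n, a i = a j → i = j) ∧
    X = a '' {i | i < n} ∧ RhoSepOnTuple ρ F A α n a

/-- There is a loop in `X` with respect to the family `{F τ : τ ∈ A}`. -/
def HasLoop (F : Ordinal → Set (Ordinal × Ordinal)) (A : Finset Ordinal)
    (X : Set Ordinal) : Prop :=
  ∃ p : ℕ, 4 ≤ p ∧ ∃ c : ℕ → Ordinal,
    (∀ i < p, c i ∈ X) ∧
    (∀ i < p - 1, ∀ j < p - 1, c i = c j → i = j) ∧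
    c 0 = c (p - 1) ∧
    (∀ i < p - 1, ∃ τ ∈ A, ∃ m : ℤ, (m = 1 ∨ m = -1) ∧ appPow (F τ) m (c i) (c (i + 1)))

/-- `p` is a member of `T ⊗ T`. -/
def InOtimes (T : SFT) (p : Ordinal × Ordinal) : Prop :=
  p.1 ∈ T.elems ∧ p.2 ∈ T.elems ∧ ht p.1 = ht p.2

/-- `f ⊆ T ⊗ T` is downwards closed as a subset of `T ⊗ T`. -/
def DCPairs (T : SFT) (f : Set (Ordinal × Ordinal)) : Prop :=
  ∀ p ∈ f, ∀ q, InOtimes T q → T.le q.1 p.1 → T.le q.2 p.2 → q ∈ f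

/-- The downward closure of `f` in `U`. -/
def dcl (U : SFT) (f : Set (Ordinal × Ordinal)) : Set (Ordinal × Ordinal) :=
  {p | InOtimes U p ∧ ∃ q ∈ f, U.le p.1 q.1 ∧ U.le p.2 q.2}

end AKST

open AKST AKST.SFT

namespace AKST
namespace SFT

lemma my_le_trans (T : SFT) {x y z : Ordinal} (h1 : T.le x y) (h2 : T.le y z) : T.le x z := by
  rcases h1 with h1 | ⟨rfl, hx⟩
  · rcases h2 with h2 | ⟨rfl, _⟩
    · exact Or.inl (T.lt_trans' h1 h2)
    · exact Or.inl h1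
  · exact h2

lemma my_lt_of_lt_of_le (T : SFT) {x y z : Ordinal} (h1 : T.lt x y) (h2 : T.le y z) :
    T.lt x z := by
  rcases h2 with h2 | ⟨rfl, _⟩
  · exact T.lt_trans' h1 h2
  · exact h1

lemma my_le_antisymm (T : SFT) {x y : Ordinal} (h1 : T.le x y) (h2 : T.le y x) : x = y := by
  rcases h1 with h1 | ⟨rfl, _⟩
  · rcases h2 with h2 | ⟨rfl, _⟩
    · exact absurd (T.lt_trans' h1 h2) (T.lt_irrefl' x)
    · rfl
  · rfl

lemma my_meet_eq (T : SFT) {x y z : Ordinal} (hz : T.isMeet x y z) : T.meet x y = z := by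
  have h : ∃ z, T.isMeet x y z := ⟨z, hz⟩
  rw [meet, dif_pos h]
  exact T.my_le_antisymm (hz.2.2 _ h.choose_spec.1 h.choose_spec.2.1)
    (h.choose_spec.2.2 _ hz.1 hz.2.1)

lemma my_ht_zero : ht 0 = 0 := Ordinal.zero_div _

lemma my_ht_eq_zero_iff {T : SFT} {x : Ordinal} (hx : x ∈ T.elems) : ht x = 0 ↔ x = 0 := by
  constructor
  · intro hh
    rcases T.mem_ok x hx with rfl | ⟨h1, _⟩
    · rfl
    · have hpos : (0 : Ordinal) < ht x := by
        rw [ht]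
        exact (Ordinal.div_pos Ordinal.omega0_ne_zero).2 h1
      exact absurd hh hpos.ne'
  · rintro rfl; exact my_ht_zero

lemma my_zero_le (T : SFT) {x : Ordinal} (hx : x ∈ T.elems) : T.le 0 x := by
  rcases eq_or_ne x 0 with rfl | hx0
  · exact Or.inr ⟨rfl, hx⟩
  · have hpos : (0 : Ordinal) < ht x :=
      pos_iff_ne_zero.2 (fun hh => hx0 ((my_ht_eq_zero_iff hx).1 hh))
    obtain ⟨y, hy, hy0, hlt⟩ := T.pred_level x hx 0 ⟨0, T.zero_mem, my_ht_zero⟩ hpos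
    have hy' : y = 0 := (my_ht_eq_zero_iff hy).1 hy0
    rw [← hy']
    exact Or.inl hlt

lemma my_pred_unique (U : SFT) {w w' x : Ordinal} (h1 : U.lt w x) (h2 : U.lt w' x)
    (hht : ht w = ht w') : w = w' := by
  rcases U.pred_linear h1 h2 with hh | hh | hh
  · exact absurd (U.lt_ht hh) (by rw [hht]; exact lt_irrefl _)
  · exact hh
  · exact absurd (U.lt_ht hh) (by rw [hht]; exact lt_irrefl _)

lemma my_drop_eq (U : SFT) {w x γ : Ordinal} (hw : U.lt w x) (hht : ht w = γ) :
    U.drop γ x = w := by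
  have h : ∃ y, y ∈ U.elems ∧ ht y = γ ∧ U.lt y x := ⟨w, (U.lt_mem hw).1, hht, hw⟩
  rw [drop, dif_pos h]
  exact U.my_pred_unique h.choose_spec.2.2 hw (h.choose_spec.2.1.trans hht.symm)

lemma my_ht_mem_heights {T : SFT} {x : Ordinal} (hx : x ∈ T.elems) (hx0 : x ≠ 0) :
    ht x ∈ T.heights := ⟨fun hh => hx0 ((my_ht_eq_zero_iff hx).1 hh), x, hx, rfl⟩

lemma my_lt_of_ext_lt {T U : SFT} (hext : Ext T U) {x y : Ordinal}
    (hx : x ∈ T.elems) (hy : y ∈ T.elems) (h : U.lt x y) : T.lt x y := by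
  obtain ⟨x', hx', hhx', hlt'⟩ := T.pred_level y hy (ht x) ⟨x, hx, rfl⟩ (U.lt_ht h)
  have hx'x : x = x' := U.my_pred_unique h (hext.2 hlt') hhx'.symm
  rw [hx'x]
  exact hlt'

lemma my_le_of_ext_le {T U : SFT} (hext : Ext T U) {x y : Ordinal}
    (hx : x ∈ T.elems) (hy : y ∈ T.elems) (h : U.le x y) : T.le x y := by
  rcases h with h | ⟨rfl, _⟩
  · exact Or.inl (my_lt_of_ext_lt hext hx hy h)
  · exact Or.inr ⟨rfl, hx⟩

lemma my_ext_le {T U : SFT} (hext : Ext T U) {x y : Ordinal} (h : T.le x y) : U.le x y := by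
  rcases h with h | ⟨rfl, hx⟩
  · exact Or.inl (hext.2 h)
  · exact Or.inr ⟨rfl, hext.1 hx⟩

lemma my_heights_finite (T : SFT) : T.heights.Finite :=
  (T.elems.finite_toSet.image ht).subset (fun α hα => by
    obtain ⟨-, x, hx, hh⟩ := hα
    exact ⟨x, hx, hh⟩)

end SFT
end AKST

/-- For a simple extension `U` of `T`, a new level `α < max(ht[T])`,
`β = min(ht[T] \ (α+1))`, `a₀ ∈ U_α` with `a₀⁺` the unique element of `T_β` above `a₀`,
and `a₁ ∈ T` incomparable with `a₀⁺` in `T`, we have `a₀ ∧_U a₁ = a₀⁺ ∧_T a₁`. -/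
theorem stmt_3 (T U : SFT) (h : SimpleExt U T) (α β a₀ a₀p a₁ : Ordinal)
    (hα : α ∈ U.heights) (hαT : α ∉ T.heights) (hαm : α < T.maxHeight)
    (hβ : β = T.minAbove α)
    (ha₀ : a₀ ∈ U.level α)
    (ha₀p : a₀p ∈ T.level β) (hup : U.lt a₀ a₀p)
    (ha₁ : a₁ ∈ T.elems) (hinc : T.Incomp a₀p a₁) :
    U.meet a₀ a₁ = T.meet a₀p a₁ := by
  classical
  obtain ⟨hext, hnew, hud⟩ := h
  obtain ⟨ha₀U, ha₀ht⟩ := ha₀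
  obtain ⟨ha₀pT, ha₀pht⟩ := ha₀p
  have hα0 : α ≠ 0 := hα.1
  -- basic facts about β
  have hTne : T.heights.Nonempty := by
    by_contra hh
    rw [Set.not_nonempty_iff_eq_empty] at hh
    rw [maxHeight, hh, csSup_empty] at hαm
    exact absurd hαm (not_lt_of_ge zero_le)
  have hmaxmem : T.maxHeight ∈ T.heights := hTne.csSup_mem (my_heights_finite T)
  have hSne : ({γ | γ ∈ T.heights ∧ α < γ} : Set Ordinal).Nonempty :=
    ⟨T.maxHeight, hmaxmem, hαm⟩
  have hβmem : β ∈ T.heights ∧ α < β := by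
    rw [hβ, minAbove]; exact csInf_mem hSne
  have hβmin : ∀ γ, γ ∈ T.heights → α < γ → β ≤ γ := fun γ h1 h2 => by
    rw [hβ, minAbove]; exact csInf_le' ⟨h1, h2⟩
  -- the meet z of a₀p and a₁ in T
  have ha₀p0 : a₀p ≠ 0 := fun hh => hβmem.1.1 (by rw [← ha₀pht, hh, my_ht_zero])
  have h0a₀p : T.lt 0 a₀p := by
    rcases T.my_zero_le ha₀pT with hh | ⟨hh, _⟩
    · exact hh
    · exact absurd hh.symm ha₀p0
  set S := T.elems.filter (fun w => T.lt w a₀p ∧ T.le w a₁) with hSdef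
  have hS0 : (0 : Ordinal) ∈ S := Finset.mem_filter.2 ⟨T.zero_mem, h0a₀p, T.my_zero_le ha₁⟩
  obtain ⟨z, hzS, hzmax⟩ := S.exists_max_image ht ⟨0, hS0⟩
  rw [Finset.mem_filter] at hzS
  obtain ⟨hzT, hza₀p, hza₁⟩ := hzS
  have hmax : ∀ w ∈ T.elems, T.lt w a₀p → T.le w a₁ → T.le w z := by
    intro w hwT hw0 hw1
    have hwS : w ∈ S := Finset.mem_filter.2 ⟨hwT, hw0, hw1⟩
    rcases T.pred_linear hw0 hza₀p with hh | hh | hh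
    · exact Or.inl hh
    · exact Or.inr ⟨hh, hwT⟩
    · exact absurd (T.lt_ht hh) (not_lt.2 (hzmax w hwS))
  have hTmeet : T.isMeet a₀p a₁ z := by
    refine ⟨Or.inl hza₀p, hza₁, ?_⟩
    intro w hw0 hw1
    rcases hw0 with hw0 | ⟨rfl, hwT⟩
    · exact hmax w (T.lt_mem hw0).1 hw0 hw1
    · rcases hw1 with hh | ⟨hh, _⟩
      · exact absurd hh hinc.2.1
      · exact absurd hh hinc.1
  -- ht z ≠ α
  have hhz_ne : ht z ≠ α := by
    intro hh
    rcases eq_or_ne z 0 with rfl | hz0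
    · exact hα0 (by rw [← hh, my_ht_zero])
    · exact hαT (hh ▸ my_ht_mem_heights hzT hz0)
  -- z <_U a₀
  have hzU : U.lt z a₀ := by
    have hza₀pU : U.lt z a₀p := hext.2 hza₀p
    rcases U.pred_linear hza₀pU hup with hh | hh | hh
    · exact hh
    · exact absurd (by rw [hh]; exact ha₀ht) hhz_ne
    · exfalso
      have h1 : α < ht z := by rw [← ha₀ht]; exact U.lt_ht hh
      have hz0 : z ≠ 0 := by
        intro hzz; rw [hzz, my_ht_zero] at h1; exact absurd h1 (not_lt_of_ge zero_le)
      have h2 : β ≤ ht z := hβmin _ (my_ht_mem_heights hzT hz0) h1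
      have h3 : ht z < β := by rw [← ha₀pht]; exact T.lt_ht hza₀p
      exact absurd h3 (not_lt.2 h2)
  have hud' : U.UniqueDrops α (T.level β) := by rw [hβ]; exact hud α hα hαT hαm
  have hdropa₀p : U.drop α a₀p = a₀ := U.my_drop_eq hup ha₀ht
  -- a₀ ≤_U a₁ is impossible
  have hnot : ¬ U.le a₀ a₁ := by
    intro hle
    rcases hle with hlt | ⟨heq, _⟩
    · have h1 : α < ht a₁ := by rw [← ha₀ht]; exact U.lt_ht hlt
      have ha₁0 : a₁ ≠ 0 := by
        intro hh; rw [hh, my_ht_zero] at h1; exact absurd h1 (not_lt_of_ge zero_le)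
      have h2 : β ≤ ht a₁ := hβmin _ (my_ht_mem_heights ha₁ ha₁0) h1
      obtain ⟨y, hyT, hyht, hyle, hya₀⟩ :
          ∃ y, y ∈ T.elems ∧ ht y = β ∧ T.le y a₁ ∧ U.lt a₀ y := by
        rcases eq_or_lt_of_le h2 with hh | hh
        · exact ⟨a₁, ha₁, hh.symm, Or.inr ⟨rfl, ha₁⟩, hlt⟩
        · obtain ⟨y, hyT, hyht, hylt⟩ := T.pred_level a₁ ha₁ β ⟨a₀p, ha₀pT, ha₀pht⟩ hh
          have hUy : U.lt y a₁ := hext.2 hylt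
          rcases U.pred_linear hlt hUy with hk | hk | hk
          · exact ⟨y, hyT, hyht, Or.inl hylt, hk⟩
          · exfalso
            apply hβmem.2.ne
            rw [← ha₀ht, hk, hyht]
          · exfalso
            have := U.lt_ht hk
            rw [hyht, ha₀ht] at this
            exact absurd hβmem.2 (not_lt.2 this.le)
      have hdy : U.drop α y = a₀ := U.my_drop_eq hya₀ ha₀ht
      have hpy : a₀p = y :=
        hud' a₀p ⟨ha₀pT, ha₀pht⟩ y ⟨hyT, hyht⟩ (by rw [hdropa₀p, hdy])
      rw [hpy] at hinc
      rcases hyle with hh | ⟨hh, _⟩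
      · exact hinc.2.1 hh
      · exact hinc.1 hh
    · apply hαT
      rw [← ha₀ht, heq]
      exact my_ht_mem_heights ha₁
        (fun hh => hα0 (by rw [← ha₀ht, heq, hh, my_ht_zero]))
  -- z is an upper bound of common lower bounds in U
  have hkey : ∀ w, U.le w a₀ → U.le w a₁ → U.le w z := by
    intro w hw0 hw1
    rcases hw0 with hw0 | ⟨rfl, -⟩
    rotate_left
    · exact absurd hw1 hnot
    have hwa₀p : U.lt w a₀p := U.lt_trans' hw0 hup
    rcases hw1 with hw1 | ⟨rfl, -⟩
    rotate_left
    · exact absurd (my_lt_of_ext_lt hext ha₁ ha₀pT hwa₀p) hinc.2.2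
    by_cases hwT : w ∈ T.elems
    · exact my_ext_le hext (hmax w hwT (my_lt_of_ext_lt hext hwT ha₀pT hwa₀p)
        (Or.inl (my_lt_of_ext_lt hext hwT ha₁ hw1)))
    · -- w is a new element of U
      have hwU : w ∈ U.elems := (U.lt_mem hw0).1
      have hw0' : w ≠ 0 := fun hh => hwT (by rw [hh]; exact T.zero_mem)
      set γ := ht w with hγ
      have hγU : γ ∈ U.heights := my_ht_mem_heights hwU hw0'
      have hγT : γ ∉ T.heights := hnew w hwU hwT
      have hγα : γ < α := by rw [hγ, ← ha₀ht]; exact U.lt_ht hw0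
      have hγm : γ < T.maxHeight := hγα.trans hαm
      have hud2 : U.UniqueDrops γ (T.level (T.minAbove γ)) := hud γ hγU hγT hγm
      set δ := T.minAbove γ with hδ
      have hδset : δ ∈ {ε | ε ∈ T.heights ∧ γ < ε} := by
        rw [hδ, minAbove]
        exact csInf_mem ⟨β, hβmem.1, hγα.trans hβmem.2⟩
      have hδβ : δ ≤ β := by
        rw [hδ, minAbove]
        exact csInf_le' ⟨hβmem.1, hγα.trans hβmem.2⟩
      obtain ⟨t, htT, htht⟩ := hδset.1.2
      -- drop of a₀p to level δ
      obtain ⟨x₀, hx₀T, hx₀ht, hx₀le, hwx₀⟩ :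
          ∃ x₀, x₀ ∈ T.elems ∧ ht x₀ = δ ∧ U.le x₀ a₀p ∧ U.lt w x₀ := by
        rcases eq_or_lt_of_le hδβ with hh | hh
        · exact ⟨a₀p, ha₀pT, by rw [ha₀pht, hh], Or.inr ⟨rfl, hext.1 ha₀pT⟩, hwa₀p⟩
        · obtain ⟨x₀, hx₀U, hx₀ht, hx₀lt⟩ := U.pred_level a₀p (hext.1 ha₀pT) δ
            ⟨t, hext.1 htT, htht⟩ (by rw [ha₀pht]; exact hh)
          have hx₀T : x₀ ∈ T.elems := by
            by_contra hc
            exact (hnew x₀ hx₀U hc) (by rw [hx₀ht]; exact hδset.1)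
          have hwx₀ : U.lt w x₀ := by
            rcases U.pred_linear hwa₀p hx₀lt with hk | hk | hk
            · exact hk
            · exfalso
              apply hδset.2.ne
              rw [hγ, hk, hx₀ht]
            · exfalso
              have := U.lt_ht hk
              rw [hx₀ht, ← hγ] at this
              exact absurd hδset.2 (not_lt.2 this.le)
          exact ⟨x₀, hx₀T, hx₀ht, Or.inl hx₀lt, hwx₀⟩
      -- drop of a₁ to level δ
      have hγa₁ : γ < ht a₁ := by rw [hγ]; exact U.lt_ht hw1
      have ha₁0 : a₁ ≠ 0 := by
        intro hh; rw [hh, my_ht_zero] at hγa₁; exact absurd hγa₁ (not_lt_of_ge zero_le)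
      have hδa₁ : δ ≤ ht a₁ := by
        rw [hδ, minAbove]
        exact csInf_le' ⟨my_ht_mem_heights ha₁ ha₁0, hγa₁⟩
      obtain ⟨x₁, hx₁T, hx₁ht, hx₁le, hwx₁⟩ :
          ∃ x₁, x₁ ∈ T.elems ∧ ht x₁ = δ ∧ U.le x₁ a₁ ∧ U.lt w x₁ := by
        rcases eq_or_lt_of_le hδa₁ with hh | hh
        · exact ⟨a₁, ha₁, hh.symm, Or.inr ⟨rfl, hext.1 ha₁⟩, hw1⟩
        · obtain ⟨x₁, hx₁U, hx₁ht, hx₁lt⟩ := U.pred_level a₁ (hext.1 ha₁) δ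
            ⟨t, hext.1 htT, htht⟩ hh
          have hx₁T : x₁ ∈ T.elems := by
            by_contra hc
            exact (hnew x₁ hx₁U hc) (by rw [hx₁ht]; exact hδset.1)
          have hwx₁ : U.lt w x₁ := by
            rcases U.pred_linear hw1 hx₁lt with hk | hk | hk
            · exact hk
            · exfalso
              apply hδset.2.ne
              rw [hγ, hk, hx₁ht]
            · exfalso
              have := U.lt_ht hk
              rw [hx₁ht, ← hγ] at this
              exact absurd hδset.2 (not_lt.2 this.le)
          exact ⟨x₁, hx₁T, hx₁ht, Or.inl hx₁lt, hwx₁⟩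
      have hdx₀ : U.drop γ x₀ = w := U.my_drop_eq hwx₀ hγ.symm
      have hdx₁ : U.drop γ x₁ = w := U.my_drop_eq hwx₁ hγ.symm
      have hx01 : x₀ = x₁ := hud2 x₀ ⟨hx₀T, hx₀ht⟩ x₁ ⟨hx₁T, hx₁ht⟩ (by rw [hdx₀, hdx₁])
      have hTle1 : T.le x₀ a₁ := by
        rw [hx01]; exact my_le_of_ext_le hext hx₁T ha₁ hx₁le
      have hTlt0 : T.lt x₀ a₀p := by
        rcases hx₀le with hh | ⟨hh, _⟩
        · exact my_lt_of_ext_lt hext hx₀T ha₀pT hh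
        · exfalso
          rw [hh] at hTle1
          rcases hTle1 with hk | ⟨hk, _⟩
          · exact hinc.2.1 hk
          · exact hinc.1 hk
      exact Or.inl (U.my_lt_of_lt_of_le hwx₀ (my_ext_le hext (hmax x₀ hx₀T hTlt0 hTle1)))
  have hUmeet : U.isMeet a₀ a₁ z := ⟨Or.inl hzU, my_ext_le hext hza₁, hkey⟩
  rw [U.my_meet_eq hUmeet, T.my_meet_eq hTmeet]
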